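/- Let b and n be positive integers. The number of (1,b)-Dyck paths of size n, i.e., the number of weakly increasing sequences (u_1, …, u_n) of nonnegative integers with u_k ≤ b(k−1) for all 1 ≤ k ≤ n, equals the Fuss–Catalan number (1/(bn+1))·C((b+1)n, n); equivalently, (bn+1) times this number equals the binomial coefficient C((b+1)n, n). -/

import Mathlib

open Finset

namespace DyckProof

def L (b n : ℕ) : ℕ := (b+1)*n+1

def stp (b : ℕ) (A : Finset ℕ) (i : ℕ) : ℤ := if i ∈ A then (b : ℤ) else -1

def psum (b : ℕ) (A : Finset ℕ) (m : ℕ) : ℤ := ∑ i ∈ Finset.range m, stp b A i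

def Dom (b n : ℕ) (A : Finset ℕ) : Prop := ∀ k < L b n, 0 ≤ psum b A k

def HH (b n : ℕ) (A : Finset ℕ) (m : ℕ) : ℤ := ∑ i ∈ Finset.range m, stp b A (i % L b n)

def rot (b n j : ℕ) (A : Finset ℕ) : Finset ℕ := A.image (fun a => (a + j) % L b n)

lemma L_pos (b n : ℕ) : 0 < L b n := by unfold L; omega

lemma psum_formula (b : ℕ) (A : Finset ℕ) (m : ℕ) :
    psum b A m = (b+1) * (((Finset.range m).filter (· ∈ A)).card : ℤ) - m := by
  induction m with
  | zero => simp [psum]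
  | succ m ih =>
    rw [psum, Finset.sum_range_succ, ← psum, ih]
    rw [Finset.range_add_one, Finset.filter_insert]
    by_cases h : m ∈ A
    · rw [if_pos h, Finset.card_insert_of_notMem (fun hc => by simp at hc)]
      simp only [stp, if_pos h]
      push_cast; ring
    · rw [if_neg h]
      simp only [stp, if_neg h]
      push_cast; ring

lemma sum_period (b n : ℕ) (A : Finset ℕ) (hA : A ⊆ Finset.range (L b n))
    (hcard : A.card = n) :
    ∑ i ∈ Finset.range (L b n), stp b A (i % L b n) = -1 := by
  have h1 : ∑ i ∈ Finset.range (L b n), stp b A (i % L b n) = psum b A (L b n) := by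
    apply Finset.sum_congr rfl
    intro i hi
    rw [Nat.mod_eq_of_lt (Finset.mem_range.mp hi)]
  rw [h1, psum_formula]
  have h2 : (Finset.range (L b n)).filter (· ∈ A) = A := by
    rw [Finset.filter_mem_eq_inter, Finset.inter_eq_right.mpr hA]
  rw [h2, hcard]
  unfold L; push_cast; ring

lemma shift_sum (b n : ℕ) (A : Finset ℕ) (m : ℕ) :
    ∑ i ∈ Finset.range (L b n), stp b A ((m + i) % L b n)
      = ∑ i ∈ Finset.range (L b n), stp b A (i % L b n) := by
  induction m with
  | zero => simp
  | succ m ih =>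
    have h1 := Finset.sum_range_succ (fun i => stp b A ((m + i) % L b n)) (L b n)
    have h2 := Finset.sum_range_succ' (fun i => stp b A ((m + i) % L b n)) (L b n)
    have h3 : stp b A ((m + L b n) % L b n) = stp b A ((m + 0) % L b n) := by
      rw [Nat.add_mod_right, Nat.add_zero]
    have h4 : ∀ i, (m + (i + 1)) = (m + 1 + i) := by omega
    have h5 : ∑ i ∈ Finset.range (L b n), stp b A ((m + 1 + i) % L b n)
        = ∑ i ∈ Finset.range (L b n), stp b A ((m + (i+1)) % L b n) := by
      apply Finset.sum_congr rfl; intro i _; have : m + 1 + i = m + (i+1) := by omega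
      rw [this]
    rw [← ih, h5]; linarith

lemma H_window (b n : ℕ) (A : Finset ℕ) (r k : ℕ) :
    HH b n A (r + k) = HH b n A r + ∑ i ∈ Finset.range k, stp b A ((r + i) % L b n) := by
  unfold HH
  have h := Finset.sum_Ico_consecutive (fun i => stp b A (i % L b n))
    (Nat.zero_le r) (Nat.le_add_right r k)
  rw [← Finset.range_eq_Ico, ← Finset.range_eq_Ico] at h
  rw [← h, Finset.sum_Ico_eq_sum_range]
  simp

lemma H_add_L (b n : ℕ) (A : Finset ℕ) (hA : A ⊆ Finset.range (L b n))
    (hcard : A.card = n) (m : ℕ) : HH b n A (m + L b n) = HH b n A m - 1 := by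
  rw [H_window, shift_sum, sum_period b n A hA hcard]; ring

lemma H_zero (b n : ℕ) (A : Finset ℕ) : HH b n A 0 = 0 := by simp [HH]

lemma mem_rot_iff (b n : ℕ) (A : Finset ℕ) (hA : A ⊆ Finset.range (L b n))
    {r : ℕ} (hr : r ≤ L b n) {i : ℕ} (hi : i < L b n) :
    i ∈ rot b n (L b n - r) A ↔ (r + i) % L b n ∈ A := by
  constructor
  · intro h
    rcases Finset.mem_image.mp h with ⟨a, ha, rfl⟩
    have haL : a < L b n := Finset.mem_range.mp (hA ha)
    have : (r + (a + (L b n - r)) % L b n) % L b n = a := by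
      rw [Nat.add_mod_mod]
      have : r + (a + (L b n - r)) = a + L b n := by omega
      rw [this, Nat.add_mod_right, Nat.mod_eq_of_lt haL]
    rw [this]; exact ha
  · intro h
    apply Finset.mem_image.mpr
    refine ⟨(r + i) % L b n, h, ?_⟩
    rw [Nat.mod_add_mod]
    have : r + i + (L b n - r) = i + L b n := by omega
    rw [this, Nat.add_mod_right, Nat.mod_eq_of_lt hi]

def GoodRead (b n : ℕ) (A : Finset ℕ) (r : ℕ) : Prop :=
  ∀ k < L b n, HH b n A r ≤ HH b n A (r + k)

lemma dom_rot_iff (b n : ℕ) (A : Finset ℕ) (hA : A ⊆ Finset.range (L b n))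
    {r : ℕ} (hr : r ≤ L b n) :
    Dom b n (rot b n (L b n - r) A) ↔ GoodRead b n A r := by
  have key : ∀ k ≤ L b n, psum b (rot b n (L b n - r) A) k
      = HH b n A (r + k) - HH b n A r := by
    intro k hk
    rw [H_window]
    have : psum b (rot b n (L b n - r) A) k
        = ∑ i ∈ Finset.range k, stp b A ((r + i) % L b n) := by
      apply Finset.sum_congr rfl
      intro i hi
      have hiL : i < L b n := lt_of_lt_of_le (Finset.mem_range.mp hi) hk
      unfold stp
      rw [if_congr (mem_rot_iff b n A hA hr hiL) rfl rfl]
    rw [this]; ring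
  constructor
  · intro hd k hk
    have := hd k hk
    rw [key k (le_of_lt hk)] at this
    linarith
  · intro hg k hk
    rw [key k (le_of_lt hk)]
    have := hg k hk
    linarith

lemma rot_rot (b n i j : ℕ) (A : Finset ℕ) :
    rot b n j (rot b n i A) = rot b n (i + j) A := by
  unfold rot
  rw [Finset.image_image]
  apply Finset.image_congr
  intro a _
  simp only [Function.comp_apply]
  rw [Nat.mod_add_mod, Nat.add_assoc]

lemma rot_L (b n : ℕ) (A : Finset ℕ) (hA : A ⊆ Finset.range (L b n)) :
    rot b n (L b n) A = A := by
  unfold rot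
  have : ∀ a ∈ A, (a + L b n) % L b n = id a := by
    intro a ha
    rw [Nat.add_mod_right, Nat.mod_eq_of_lt (Finset.mem_range.mp (hA ha))]
    rfl
  rw [Finset.image_congr this, Finset.image_id]

lemma rot_card (b n j : ℕ) (A : Finset ℕ) (hA : A ⊆ Finset.range (L b n)) :
    (rot b n j A).card = A.card := by
  apply Finset.card_image_of_injOn
  intro a ha a' ha' h
  have h1 : a < L b n := Finset.mem_range.mp (hA ha)
  have h2 : a' < L b n := Finset.mem_range.mp (hA ha')
  have : (j + a) % L b n = (j + a') % L b n := by
    rw [Nat.add_comm j a, Nat.add_comm j a']; exact h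
  have := (Nat.ModEq.add_right_cancel' j ?_ : a ≡ a' [MOD L b n])
  · rwa [Nat.ModEq, Nat.mod_eq_of_lt h1, Nat.mod_eq_of_lt h2] at this
  · rwa [Nat.ModEq]

lemma rot_subset (b n j : ℕ) (A : Finset ℕ) : rot b n j A ⊆ Finset.range (L b n) := by
  intro x hx
  rcases Finset.mem_image.mp hx with ⟨a, _, rfl⟩
  exact Finset.mem_range.mpr (Nat.mod_lt _ (L_pos b n))

lemma goodread_exists (b n : ℕ) (A : Finset ℕ) (hA : A ⊆ Finset.range (L b n))
    (hcard : A.card = n) :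
    ∃ r, 1 ≤ r ∧ r ≤ L b n ∧ GoodRead b n A r := by
  have hne : (Finset.range (L b n)).Nonempty := ⟨0, Finset.mem_range.mpr (L_pos b n)⟩
  obtain ⟨r0, hr0, hmin0⟩ := Finset.exists_min_image (Finset.range (L b n)) (HH b n A) hne
  have hP : ∃ r, r < L b n ∧ ∀ i < L b n, HH b n A r ≤ HH b n A i :=
    ⟨r0, Finset.mem_range.mp hr0, fun i hi => hmin0 i (Finset.mem_range.mpr hi)⟩
  classical
  have hrL : Nat.find hP < L b n := (Nat.find_spec hP).1
  have hrmin : ∀ i < L b n, HH b n A (Nat.find hP) ≤ HH b n A i := (Nat.find_spec hP).2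
  have hfirst : ∀ i < Nat.find hP, HH b n A (Nat.find hP) + 1 ≤ HH b n A i := by
    intro i hi
    have hiL : i < L b n := lt_trans hi hrL
    have hnm := Nat.find_min hP hi
    push_neg at hnm
    obtain ⟨i', hi'L, hlt⟩ := hnm hiL
    have := hrmin i' hi'L
    omega
  set r := Nat.find hP with hrdef
  have hgood : GoodRead b n A r := by
    intro k hk
    by_cases hc : r + k < L b n
    · exact hrmin _ hc
    · have ht : r + k = (r + k - L b n) + L b n := by omega
      have htr : r + k - L b n < r := by omega
      rw [ht, H_add_L b n A hA hcard]
      have := hfirst _ htr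
      omega
  by_cases hr0' : r = 0
  · refine ⟨L b n, L_pos b n, le_refl _, ?_⟩
    intro k hk
    have h1 : HH b n A (L b n) = HH b n A 0 - 1 := by
      have := H_add_L b n A hA hcard 0
      simpa using this
    have h2 : HH b n A (L b n + k) = HH b n A k - 1 := by
      rw [Nat.add_comm, H_add_L b n A hA hcard]
    have := hgood k hk
    rw [hr0'] at this
    simp only [Nat.zero_add] at this
    omega
  · exact ⟨r, by omega, le_of_lt hrL, hgood⟩

lemma goodread_unique (b n : ℕ) (A : Finset ℕ) (hA : A ⊆ Finset.range (L b n))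
    (hcard : A.card = n) {r1 r2 : ℕ}
    (h1 : 1 ≤ r1 ∧ r1 ≤ L b n ∧ GoodRead b n A r1)
    (h2 : 1 ≤ r2 ∧ r2 ≤ L b n ∧ GoodRead b n A r2) : r1 = r2 := by
  obtain ⟨h1a, h1b, h1g⟩ := h1
  obtain ⟨h2a, h2b, h2g⟩ := h2
  by_contra hne
  wlog hlt : r1 < r2 generalizing r1 r2
  · exact this h2a h2b h2g h1a h1b h1g (Ne.symm hne) (by omega)
  have e1 : HH b n A r1 ≤ HH b n A r2 := by
    have := h1g (r2 - r1) (by omega)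
    have heq : r1 + (r2 - r1) = r2 := by omega
    rwa [heq] at this
  have e2 : HH b n A r2 ≤ HH b n A (r1 + L b n) := by
    have := h2g (r1 + L b n - r2) (by omega)
    have heq : r2 + (r1 + L b n - r2) = r1 + L b n := by omega
    rwa [heq] at this
  rw [H_add_L b n A hA hcard] at e2
  omega

noncomputable def S (b n : ℕ) : Finset (Finset ℕ) :=
  @Finset.filter _ (Dom b n) (Classical.decPred _)
    (Finset.powersetCard n (Finset.range (L b n)))

lemma mem_S (b n : ℕ) (A : Finset ℕ) :
    A ∈ S b n ↔ (A ⊆ Finset.range (L b n) ∧ A.card = n) ∧ Dom b n A := by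
  unfold S
  letI := Classical.decPred (Dom b n)
  rw [Finset.mem_filter, Finset.mem_powersetCard]

lemma card_S_mul (b n : ℕ) : (S b n).card * L b n = (L b n).choose n := by
  have hT : (Finset.powersetCard n (Finset.range (L b n))).card = (L b n).choose n := by
    rw [Finset.card_powersetCard, Finset.card_range]
  rw [← hT]
  have hcard : ((S b n) ×ˢ Finset.Icc 1 (L b n)).card = (S b n).card * L b n := by
    rw [Finset.card_product, Nat.card_Icc, Nat.add_sub_cancel]
  rw [← hcard]
  apply Finset.card_bij (fun p _ => rot b n p.2 p.1)
  · rintro ⟨A, j⟩ hp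
    rw [Finset.mem_product] at hp
    obtain ⟨hAS, hj⟩ := hp
    rw [mem_S] at hAS
    rw [Finset.mem_powersetCard]
    exact ⟨rot_subset b n j A, by rw [rot_card b n j A hAS.1.1]; exact hAS.1.2⟩
  · rintro ⟨A, j⟩ hp ⟨A', j'⟩ hp' heq
    rw [Finset.mem_product] at hp hp'
    dsimp only at heq hp hp' ⊢
    have hAS := hp.1
    have hj1 := (Finset.mem_Icc.mp hp.2).1
    have hj2 := (Finset.mem_Icc.mp hp.2).2
    have hAS' := hp'.1
    have hj1' := (Finset.mem_Icc.mp hp'.2).1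
    have hj2' := (Finset.mem_Icc.mp hp'.2).2
    rw [mem_S] at hAS hAS'
    have hArec : rot b n (L b n - j) (rot b n j A) = A := by
      rw [rot_rot]
      have : j + (L b n - j) = L b n := by omega
      rw [this, rot_L b n A hAS.1.1]
    have hArec' : rot b n (L b n - j') (rot b n j' A') = A' := by
      rw [rot_rot]
      have : j' + (L b n - j') = L b n := by omega
      rw [this, rot_L b n A' hAS'.1.1]
    have hBsub : rot b n j A ⊆ Finset.range (L b n) := rot_subset b n j A
    have hBcard : (rot b n j A).card = n := by
      rw [rot_card b n j A hAS.1.1]; exact hAS.1.2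
    have hg1 : GoodRead b n (rot b n j A) j := by
      rw [← dom_rot_iff b n _ hBsub hj2, hArec]
      exact hAS.2
    have hg2 : GoodRead b n (rot b n j A) j' := by
      rw [← dom_rot_iff b n _ hBsub hj2']
      rw [heq, hArec']
      exact hAS'.2
    have hjj : j = j' :=
      goodread_unique b n _ hBsub hBcard ⟨hj1, hj2, hg1⟩ ⟨hj1', hj2', hg2⟩
    subst hjj
    have hAA : A = A' := by
      rw [← hArec, ← hArec', heq]
    simp [hAA]
  · intro B hB
    rw [Finset.mem_powersetCard] at hB
    obtain ⟨r, hr1, hr2, hgr⟩ := goodread_exists b n B hB.1 hB.2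
    refine ⟨(rot b n (L b n - r) B, r), ?_, ?_⟩
    · rw [Finset.mem_product, Finset.mem_Icc, mem_S]
      refine ⟨⟨⟨rot_subset _ _ _ _, by rw [rot_card _ _ _ _ hB.1]; exact hB.2⟩, ?_⟩, hr1, hr2⟩
      rw [dom_rot_iff b n B hB.1 hr2]
      exact hgr
    · rw [rot_rot]
      have : L b n - r + r = L b n := by omega
      rw [this, rot_L b n B hB.1]

lemma sm_le {n : ℕ} {f : Fin n → ℕ} (hf : StrictMono f) :
    ∀ v (h : v < n), v ≤ f ⟨v, h⟩ := by
  intro v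
  induction v with
  | zero => intro h; exact Nat.zero_le _
  | succ v ih =>
    intro h
    have h' : v < n := by omega
    have h1 := hf (show (⟨v, h'⟩ : Fin n) < ⟨v+1, h⟩ by simp [Fin.lt_def])
    have h2 := ih h'
    omega

lemma sm_add_le {n : ℕ} {f : Fin n → ℕ} (hf : StrictMono f) :
    ∀ v' (h' : v' < n) v (h : v < n), v ≤ v' → f ⟨v, h⟩ + (v' - v) ≤ f ⟨v', h'⟩ := by
  intro v'
  induction v' with
  | zero =>
    intro h' v h hv
    interval_cases v
    simp
  | succ v' ih =>
    intro h' v h hv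
    by_cases hc : v = v' + 1
    · subst hc; simp
    · have hvv : v ≤ v' := by omega
      have hn' : v' < n := by omega
      have h1 := ih hn' v h hvv
      have h2 := hf (show (⟨v', hn'⟩ : Fin n) < ⟨v'+1, h'⟩ by simp [Fin.lt_def])
      omega

def toFun (b n : ℕ) (u : Fin n → ℕ) : Finset ℕ :=
  Finset.image (fun k : Fin n => u k + (k : ℕ)) Finset.univ

lemma toFun_strictMono {b n : ℕ} {u : Fin n → ℕ} (hu : Monotone u) :
    StrictMono (fun k : Fin n => u k + (k : ℕ)) := by
  intro k k' h
  have h1 := hu (le_of_lt h)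
  have h2 : (k : ℕ) < (k' : ℕ) := h
  show u k + (k : ℕ) < u k' + (k' : ℕ)
  omega

lemma toFun_mem_S {b n : ℕ} (u : Fin n → ℕ) (hu : Monotone u)
    (hub : ∀ k : Fin n, u k ≤ b * (k : ℕ)) : toFun b n u ∈ S b n := by
  have hp := toFun_strictMono (b := b) hu
  rw [mem_S]
  have hsub : toFun b n u ⊆ Finset.range (L b n) := by
    intro x hx
    rcases Finset.mem_image.mp hx with ⟨k, _, rfl⟩
    have h1 := hub k
    have h2 : (b+1) * (k : ℕ) < (b+1) * n :=
      mul_lt_mul_of_pos_left k.isLt (by omega)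
    have h3 : (b+1) * (k : ℕ) = b * k + k := by ring
    rw [Finset.mem_range]
    unfold L
    omega
  have hcard : (toFun b n u).card = n := by
    unfold toFun
    rw [Finset.card_image_of_injective _ hp.injective, Finset.card_univ, Fintype.card_fin]
  refine ⟨⟨hsub, hcard⟩, ?_⟩
  intro m hm
  rw [psum_formula]
  set F := (Finset.range m).filter (· ∈ toFun b n u) with hF
  suffices hsuf : m ≤ (b+1) * F.card by
    push_cast
    push_cast at hsuf
    linarith
  by_cases hall : ∀ k : Fin n, u k + (k : ℕ) < m
  · have hAm : toFun b n u ⊆ Finset.range m := by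
      intro x hx
      rcases Finset.mem_image.mp hx with ⟨k, _, rfl⟩
      exact Finset.mem_range.mpr (hall k)
    have : F = toFun b n u := by
      rw [hF, Finset.filter_mem_eq_inter, Finset.inter_eq_right.mpr hAm]
    rw [this, hcard]
    unfold L at hm
    omega
  · push_neg at hall
    obtain ⟨k, hk⟩ := hall
    have hne : (Finset.univ.filter (fun k : Fin n => m ≤ u k + (k : ℕ))).Nonempty :=
      ⟨k, Finset.mem_filter.mpr ⟨Finset.mem_univ _, hk⟩⟩
    set k0 := (Finset.univ.filter (fun k : Fin n => m ≤ u k + (k : ℕ))).min' hne with hk0def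
    have hk0 : m ≤ u k0 + (k0 : ℕ) :=
      (Finset.mem_filter.mp ((Finset.univ.filter _).min'_mem hne)).2
    have hlt : ∀ i : Fin n, i < k0 → u i + (i : ℕ) < m := by
      intro i hi
      by_contra hc
      push_neg at hc
      have : k0 ≤ i := Finset.min'_le
        (Finset.univ.filter (fun k : Fin n => m ≤ u k + (k : ℕ))) i
        (Finset.mem_filter.mpr ⟨Finset.mem_univ i, hc⟩)
      exact absurd hi (not_lt.mpr this)
    have hcle : (k0 : ℕ) ≤ F.card := by
      have := Finset.card_le_card_of_injOn
        (fun v => if h : v < n then u ⟨v, h⟩ + v else 0)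
        (s := Finset.range (k0 : ℕ)) (t := F) ?_ ?_
      · simpa using this
      · intro v hv
        have hvn : v < n := lt_trans (Finset.mem_range.mp hv) k0.isLt
        show (if h : v < n then u ⟨v, h⟩ + v else 0) ∈ F
        rw [dif_pos hvn]
        rw [hF, Finset.mem_filter]
        constructor
        · exact Finset.mem_range.mpr (hlt ⟨v, hvn⟩ (by
            rw [Fin.lt_def]; exact Finset.mem_range.mp hv))
        · exact Finset.mem_image.mpr ⟨⟨v, hvn⟩, Finset.mem_univ _, rfl⟩
      · intro v hv v' hv' hevv
        simp only [Finset.coe_range, Set.mem_Iio] at hv hv'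
        have hvn : v < n := lt_trans hv k0.isLt
        have hvn' : v' < n := lt_trans hv' k0.isLt
        simp only at hevv
        rw [dif_pos hvn, dif_pos hvn'] at hevv
        have := hp.injective (a₁ := ⟨v, hvn⟩) (a₂ := ⟨v', hvn'⟩) (by simpa using hevv)
        simpa [Fin.mk.injEq] using this
    have hb1 : u k0 + (k0 : ℕ) ≤ (b+1) * (k0 : ℕ) := by
      have := hub k0
      have : (b+1) * (k0 : ℕ) = b * k0 + k0 := by ring
      omega
    have hb2 : (b+1) * (k0 : ℕ) ≤ (b+1) * F.card := Nat.mul_le_mul_left _ hcle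
    omega

lemma S_mem_toFun {b n : ℕ} {A : Finset ℕ} (hA : A ∈ S b n) :
    ∃ u : Fin n → ℕ, (Monotone u ∧ ∀ k : Fin n, u k ≤ b * (k : ℕ)) ∧ toFun b n u = A := by
  rw [mem_S] at hA
  obtain ⟨⟨hsub, hcard⟩, hdom⟩ := hA
  set p := A.orderEmbOfFin hcard with hpdef
  have hps : StrictMono p := (A.orderEmbOfFin hcard).strictMono
  have hkle : ∀ k : Fin n, (k : ℕ) ≤ p k := fun k => by
    have := sm_le hps k.val k.isLt
    simpa using this
  have himg : Finset.image (fun k => p k) Finset.univ = A := by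
    apply Finset.eq_of_subset_of_card_le
    · intro x hx
      rcases Finset.mem_image.mp hx with ⟨k, _, rfl⟩
      exact Finset.orderEmbOfFin_mem A hcard k
    · rw [Finset.card_image_of_injective _ hps.injective, Finset.card_univ, Fintype.card_fin,
        hcard]
  refine ⟨fun k => p k - (k : ℕ), ⟨?_, ?_⟩, ?_⟩
  · intro k k' hkk'
    have h1 : p k + ((k' : ℕ) - (k : ℕ)) ≤ p k' := by
      have := sm_add_le hps k'.val k'.isLt k.val k.isLt hkk'
      simpa using this
    have h2 := hkle k
    have h3 : (k : ℕ) ≤ (k' : ℕ) := hkk'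
    simp only
    omega
  · intro k
    have hmem : p k ∈ A := Finset.orderEmbOfFin_mem A hcard k
    have hpkL : p k < L b n := Finset.mem_range.mp (hsub hmem)
    have hd := hdom (p k) hpkL
    rw [psum_formula] at hd
    have hcnt : ((Finset.range (p k)).filter (· ∈ A)).card = (k : ℕ) := by
      have hset : (Finset.range (p k)).filter (· ∈ A)
          = Finset.image (fun i => p i) (Finset.univ.filter (fun i : Fin n => i < k)) := by
        ext x
        simp only [Finset.mem_filter, Finset.mem_range, Finset.mem_image, Finset.mem_univ,
          true_and]
        constructor
        · rintro ⟨hxk, hxA⟩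
          rw [← himg] at hxA
          rcases Finset.mem_image.mp hxA with ⟨i, _, rfl⟩
          exact ⟨i, hps.lt_iff_lt.mp hxk, rfl⟩
        · rintro ⟨i, hik, rfl⟩
          exact ⟨hps.lt_iff_lt.mpr hik, Finset.orderEmbOfFin_mem A hcard i⟩
      rw [hset, Finset.card_image_of_injective _ hps.injective]
      have : Finset.univ.filter (fun i : Fin n => i < k) = Finset.Iio k := by
        ext i; simp
      rw [this, Fin.card_Iio]
    rw [hcnt] at hd
    have h2 := hkle k
    have h3 : (p k : ℤ) ≤ (b+1) * (k : ℕ) := by linarith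
    have h4 : (p k : ℕ) ≤ (b+1) * (k : ℕ) := by exact_mod_cast h3
    have h5 : (b+1) * (k : ℕ) = b * k + k := by ring
    show p k - (k : ℕ) ≤ b * (k : ℕ)
    omega
  · unfold toFun
    rw [← himg]
    apply Finset.image_congr
    intro k _
    have := hkle k
    simp only
    omega

theorem dyck_count (b n : ℕ) :
    Set.ncard {u : Fin n → ℕ | Monotone u ∧ ∀ k : Fin n, u k ≤ b * (k : ℕ)}
      = (S b n).card := by
  set D := {u : Fin n → ℕ | Monotone u ∧ ∀ k : Fin n, u k ≤ b * (k : ℕ)} with hD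
  have hinj : Set.InjOn (toFun b n) D := by
    intro u hu v hv heq
    have hpu := toFun_strictMono (b := b) hu.1
    have hpv := toFun_strictMono (b := b) hv.1
    have hcard : (toFun b n u).card = n := by
      unfold toFun
      rw [Finset.card_image_of_injective _ hpu.injective, Finset.card_univ, Fintype.card_fin]
    have h1 : (fun k : Fin n => u k + (k : ℕ)) = (toFun b n u).orderEmbOfFin hcard :=
      Finset.orderEmbOfFin_unique hcard
        (fun x => Finset.mem_image.mpr ⟨x, Finset.mem_univ _, rfl⟩) hpu
    have h2 : (fun k : Fin n => v k + (k : ℕ)) = (toFun b n u).orderEmbOfFin hcard :=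
      Finset.orderEmbOfFin_unique hcard
        (fun x => by rw [heq]; exact Finset.mem_image.mpr ⟨x, Finset.mem_univ _, rfl⟩) hpv
    funext k
    have := congrFun (h1.trans h2.symm) k
    omega
  have himg : toFun b n '' D = ↑(S b n) := by
    ext A
    constructor
    · rintro ⟨u, hu, rfl⟩
      exact toFun_mem_S u hu.1 hu.2
    · intro hA
      obtain ⟨u, hu, hAu⟩ := S_mem_toFun (Finset.mem_coe.mp hA)
      exact ⟨u, hu, hAu⟩
  calc D.ncard = (toFun b n '' D).ncard := (Set.ncard_image_of_injOn hinj).symm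
    _ = (S b n).card := by rw [himg, Set.ncard_coe_finset]

end DyckProof

theorem count_b_dyck_paths (b n : ℕ) (hb : 0 < b) (hn : 0 < n) :
    (b * n + 1) *
      Set.ncard {u : Fin n → ℕ | Monotone u ∧ ∀ k : Fin n, u k ≤ b * (k : ℕ)}
      = Nat.choose ((b + 1) * n) n := by
  rw [DyckProof.dyck_count b n]
  have hmul := DyckProof.card_S_mul b n
  have hid := Nat.choose_mul_succ_eq ((b+1)*n) n
  have hL : DyckProof.L b n = (b+1)*n+1 := rfl
  have hsub : (b+1)*n + 1 - n = b*n + 1 := by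
    have : (b+1)*n = b*n + n := by ring
    omega
  rw [hsub] at hid
  apply Nat.eq_of_mul_eq_mul_right (DyckProof.L_pos b n)
  calc (b * n + 1) * (DyckProof.S b n).card * DyckProof.L b n
      = (b * n + 1) * ((DyckProof.S b n).card * DyckProof.L b n) := by ring
    _ = (b * n + 1) * (DyckProof.L b n).choose n := by rw [hmul]
    _ = ((b+1)*n).choose n * DyckProof.L b n := by
        rw [hL]
        linarith [hid]
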